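/- Let T be the (q+1)-homogeneous rooted tree with q ≥ 2, let 1 ≤ p < ∞, and let φ be a bounded self-map of T (i.e. {|φ(v)| : v ∈ T} is bounded) with sup_{v∈T} |φ(v)| = M. Then C_φ is bounded on T_p with ‖C_φ‖^p ≤ c_M. Moreover, ‖C_φ‖^p = c_M if and only if sup_{n ≥ 0} N_{M,n}/c_n = 1. -/

import Mathlib

open scoped BigOperators Classical

noncomputable section

/-- `treeC q n` is the number `c_n` of vertices at level `n` of the
`(q+1)`-homogeneous rooted tree: `c_0 = 1` and `c_n = (q+1) q^(n-1)` for `n ≥ 1`. -/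
def treeC (q n : ℕ) : ℕ := if n = 0 then 1 else (q + 1) * q ^ (n - 1)

/-- An abstract `(q+1)`-homogeneous rooted tree, described by its vertex set, root,
level function `|·|` (graph distance to the root), and the level counts:
level `n` contains exactly `c_n = treeC q n` vertices. -/
structure HomTree (q : ℕ) where
  V : Type
  root : V
  level : V → ℕ
  level_eq_zero_iff : ∀ v : V, level v = 0 ↔ v = root
  finiteLevel : ∀ n : ℕ, {v : V | level v = n}.Finite
  card_level : ∀ n : ℕ, (finiteLevel n).toFinset.card = treeC q n

namespace HomTree

variable {q : ℕ} (T : HomTree q)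

/-- The set `D_n` of vertices of level `n`, as a finset. -/
def levelFinset (n : ℕ) : Finset T.V := (T.finiteLevel n).toFinset

/-- `M_p(n, f)` for `0 < p < ∞`:
`M_p(n,f) = ((1/c_n) ∑_{|v|=n} |f v|^p)^(1/p)` (which equals `|f o|` for `n = 0`). -/
def Mp (p : ℝ) (n : ℕ) (f : T.V → ℂ) : ℝ :=
  ((1 / (treeC q n : ℝ)) * ∑ v ∈ T.levelFinset n, ‖f v‖ ^ p) ^ (1 / p)

/-- `M_∞(n, f) = max_{|v| = n} |f v|`. -/
def Minf (n : ℕ) (f : T.V → ℂ) : ℝ :=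
  sSup ((fun v => ‖f v‖) '' {v : T.V | T.level v = n})

/-- `f ∈ T_p`, i.e. `‖f‖_p = sup_n M_p(n,f) < ∞`. -/
def memTp (p : ℝ) (f : T.V → ℂ) : Prop := BddAbove (Set.range fun n => T.Mp p n f)

/-- `‖f‖_p = sup_n M_p(n, f)`. -/
def normTp (p : ℝ) (f : T.V → ℂ) : ℝ := ⨆ n, T.Mp p n f

/-- `f ∈ T_∞`. -/
def memTinf (f : T.V → ℂ) : Prop := BddAbove (Set.range fun n => T.Minf n f)

/-- `‖f‖_∞ = sup_n M_∞(n, f)`. -/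
def normTinf (f : T.V → ℂ) : ℝ := ⨆ n, T.Minf n f

/-- `f ∈ T_{p,0}`: `f ∈ T_p` and `M_p(n,f) → 0` as `n → ∞`. -/
def memTp0 (p : ℝ) (f : T.V → ℂ) : Prop :=
  T.memTp p f ∧ Filter.Tendsto (fun n => T.Mp p n f) Filter.atTop (nhds 0)

/-- `f ∈ T_{∞,0}`. -/
def memTinf0 (f : T.V → ℂ) : Prop :=
  T.memTinf f ∧ Filter.Tendsto (fun n => T.Minf n f) Filter.atTop (nhds 0)

/-- `N_φ(n, w)`: the number of preimages of `w` under `φ` at level `n`. -/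
def Nphi (phi : T.V → T.V) (n : ℕ) (w : T.V) : ℕ :=
  ((T.levelFinset n).filter fun v => phi v = w).card

/-- `N_{m,n} = max_{|w| = m} N_φ(n, w)`. -/
def Nmax (phi : T.V → T.V) (m n : ℕ) : ℕ :=
  (T.levelFinset m).sup fun w => T.Nphi phi n w

/-- `C_φ` is a bounded operator on `T_p`: it maps `T_p` into `T_p` and
`‖f ∘ φ‖_p ≤ C ‖f‖_p` for some constant `C`. -/
def BoundedCompTp (p : ℝ) (phi : T.V → T.V) : Prop :=
  (∀ f : T.V → ℂ, T.memTp p f → T.memTp p (f ∘ phi)) ∧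
  ∃ C : ℝ, ∀ f : T.V → ℂ, T.memTp p f → T.normTp p (f ∘ phi) ≤ C * T.normTp p f

/-- The operator norm of `C_φ` on `T_p`: `sup {‖f ∘ φ‖_p : f ∈ T_p, ‖f‖_p = 1}`. -/
def opNormTp (p : ℝ) (phi : T.V → T.V) : ℝ :=
  sSup {x : ℝ | ∃ f : T.V → ℂ, T.memTp p f ∧ T.normTp p f = 1 ∧ x = T.normTp p (f ∘ phi)}

/-- `C_φ` is a bounded operator on `T_{p,0}`. -/
def BoundedCompTp0 (p : ℝ) (phi : T.V → T.V) : Prop :=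
  (∀ f : T.V → ℂ, T.memTp0 p f → T.memTp0 p (f ∘ phi)) ∧
  ∃ C : ℝ, ∀ f : T.V → ℂ, T.memTp0 p f → T.normTp p (f ∘ phi) ≤ C * T.normTp p f

/-- The operator norm of `C_φ` on `T_{p,0}`. -/
def opNormTp0 (p : ℝ) (phi : T.V → T.V) : ℝ :=
  sSup {x : ℝ | ∃ f : T.V → ℂ, T.memTp0 p f ∧ T.normTp p f = 1 ∧ x = T.normTp p (f ∘ phi)}

/-- `C_φ` is a bounded operator on `T_{∞,0}`. -/
def BoundedCompTinf0 (phi : T.V → T.V) : Prop :=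
  (∀ f : T.V → ℂ, T.memTinf0 f → T.memTinf0 (f ∘ phi)) ∧
  ∃ C : ℝ, ∀ f : T.V → ℂ, T.memTinf0 f → T.normTinf (f ∘ phi) ≤ C * T.normTinf f

end HomTree

section Aux

variable {q : ℕ} (T : HomTree q) {p : ℝ}

lemma treeC_pos (hq : 1 ≤ q) (n : ℕ) : 0 < treeC q n := by
  unfold treeC; split
  · exact one_pos
  · positivity

lemma treeC_cast_pos (hq : 1 ≤ q) (n : ℕ) : (0:ℝ) < (treeC q n : ℝ) := by
  exact_mod_cast treeC_pos hq n

lemma treeC_mono (hq : 1 ≤ q) {m n : ℕ} (h : m ≤ n) : treeC q m ≤ treeC q n := by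
  rcases Nat.eq_zero_or_pos m with hm | hm
  · subst hm
    exact treeC_pos hq n
  · have hn : n ≠ 0 := by omega
    have hm' : m ≠ 0 := by omega
    simp only [treeC, hm', hn, if_false]
    exact Nat.mul_le_mul_left _ (Nat.pow_le_pow_right hq (by omega))

lemma treeC_lt (hq : 2 ≤ q) {M : ℕ} (hM : 1 ≤ M) : treeC q (M - 1) < treeC q M := by
  rcases Nat.eq_or_lt_of_le hM with h1 | h1
  · rw [← h1]
    simp only [treeC]
    norm_num
    omega
  · have h2 : M - 1 ≠ 0 := by omega
    have h3 : M ≠ 0 := by omega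
    simp only [treeC, h2, h3, if_false]
    have hlt : q ^ (M - 1 - 1) < q ^ (M - 1) := Nat.pow_lt_pow_right (by omega) (by omega)
    exact mul_lt_mul_of_pos_left hlt (by omega)

namespace HomTree

lemma mem_levelFinset {n : ℕ} {v : T.V} : v ∈ T.levelFinset n ↔ T.level v = n :=
  Set.Finite.mem_toFinset _

lemma sum_nonneg' (hp : 0 < p) (f : T.V → ℂ) (n : ℕ) :
    0 ≤ ∑ v ∈ T.levelFinset n, ‖f v‖ ^ p :=
  Finset.sum_nonneg fun v _ => Real.rpow_nonneg (norm_nonneg _) _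

lemma Mp_nonneg (hp : 0 < p) (f : T.V → ℂ) (n : ℕ) : 0 ≤ T.Mp p n f := by
  apply Real.rpow_nonneg
  have := T.sum_nonneg' hp f n
  positivity

lemma Mp_rpow (hq : 1 ≤ q) (hp : 0 < p) (f : T.V → ℂ) (n : ℕ) :
    T.Mp p n f ^ p =
      (1 / (treeC q n : ℝ)) * ∑ v ∈ T.levelFinset n, ‖f v‖ ^ p := by
  rw [Mp, one_div p, Real.rpow_inv_rpow _ hp.ne']
  have := T.sum_nonneg' hp f n
  positivity

lemma sum_eq_treeC_mul (hq : 1 ≤ q) (hp : 0 < p) (f : T.V → ℂ) (n : ℕ) :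
    ∑ v ∈ T.levelFinset n, ‖f v‖ ^ p = (treeC q n : ℝ) * T.Mp p n f ^ p := by
  rw [T.Mp_rpow hq hp f n, ← mul_assoc, mul_one_div,
    div_self (treeC_cast_pos hq n).ne', one_mul]

lemma normTp_nonneg (hp : 0 < p) {f : T.V → ℂ} (hf : T.memTp p f) : 0 ≤ T.normTp p f :=
  (T.Mp_nonneg hp f 0).trans (le_ciSup hf 0)

lemma Mp_le_normTp {f : T.V → ℂ} (hf : T.memTp p f) (n : ℕ) : T.Mp p n f ≤ T.normTp p f :=
  le_ciSup hf n

/-- pointwise bound: `|f w|^p ≤ c_{|w|} ‖f‖^p`. -/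
lemma abs_rpow_le (hq : 1 ≤ q) (hp : 0 < p) {f : T.V → ℂ} (hf : T.memTp p f) (w : T.V) :
    ‖f w‖ ^ p ≤ (treeC q (T.level w) : ℝ) * T.normTp p f ^ p := by
  have h1 : ‖f w‖ ^ p ≤ ∑ v ∈ T.levelFinset (T.level w), ‖f v‖ ^ p :=
    Finset.single_le_sum (fun v _ => Real.rpow_nonneg (norm_nonneg _) _)
      (T.mem_levelFinset.2 rfl)
  rw [T.sum_eq_treeC_mul hq hp] at h1
  refine h1.trans (mul_le_mul_of_nonneg_left ?_ (treeC_cast_pos hq _).le)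
  exact Real.rpow_le_rpow (T.Mp_nonneg hp f _) (T.Mp_le_normTp hf _) hp.le

lemma abs_rpow_le' (hq : 1 ≤ q) (hp : 0 < p) {f : T.V → ℂ} (hf : T.memTp p f)
    {w : T.V} {m : ℕ} (hw : T.level w ≤ m) :
    ‖f w‖ ^ p ≤ (treeC q m : ℝ) * T.normTp p f ^ p := by
  refine (T.abs_rpow_le hq hp hf w).trans (mul_le_mul_of_nonneg_right ?_ ?_)
  · exact_mod_cast treeC_mono hq hw
  · exact Real.rpow_nonneg (T.normTp_nonneg hp hf) _

lemma card_levelFinset (n : ℕ) : (T.levelFinset n).card = treeC q n := T.card_level n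

/-- basic norm estimate for the composition. -/
lemma Mp_comp_le (hq : 1 ≤ q) (hp : 0 < p) {phi : T.V → T.V} {M : ℕ}
    (hub : ∀ v, T.level (phi v) ≤ M) {f : T.V → ℂ} (hf : T.memTp p f) (n : ℕ) :
    T.Mp p n (f ∘ phi) ≤ (treeC q M : ℝ) ^ (1/p) * T.normTp p f := by
  have hsum : ∑ v ∈ T.levelFinset n, ‖(f ∘ phi) v‖ ^ p ≤
      (treeC q n : ℝ) * ((treeC q M : ℝ) * T.normTp p f ^ p) := by
    rw [← T.card_levelFinset n]
    have := Finset.sum_le_card_nsmul (T.levelFinset n)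
      (fun v => ‖(f ∘ phi) v‖ ^ p) ((treeC q M : ℝ) * T.normTp p f ^ p)
      (fun v _ => T.abs_rpow_le' hq hp hf (hub v))
    simpa [nsmul_eq_mul] using this
  have hN : 0 ≤ T.normTp p f := T.normTp_nonneg hp hf
  have hc : (0:ℝ) < (treeC q n : ℝ) := treeC_cast_pos hq n
  have hcM : (0:ℝ) ≤ (treeC q M : ℝ) := (treeC_cast_pos hq M).le
  have hbase : (1 / (treeC q n : ℝ)) * ∑ v ∈ T.levelFinset n, ‖(f ∘ phi) v‖ ^ p ≤
      (treeC q M : ℝ) * T.normTp p f ^ p := by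
    rw [one_div, inv_mul_le_iff₀ hc, mul_comm ((treeC q n : ℝ))]
    exact hsum.trans (le_of_eq (by ring))
  calc T.Mp p n (f ∘ phi) ≤ ((treeC q M : ℝ) * T.normTp p f ^ p) ^ (1/p) := by
        rw [Mp]
        refine Real.rpow_le_rpow ?_ hbase (by positivity)
        have := T.sum_nonneg' hp (f ∘ phi) n
        positivity
    _ = (treeC q M : ℝ) ^ (1/p) * T.normTp p f := by
        rw [Real.mul_rpow hcM (by positivity), one_div, Real.rpow_rpow_inv hN hp.ne']

end HomTree

lemma arith_aux {SA SB a b cn cM cM1 N s : ℝ} (hA1 : SA ≤ a * cM) (hA2 : SA ≤ N * cM)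
    (hB1 : SB ≤ b * cM1) (hNs : N ≤ s * cn) (hcard : a + b = cn)
    (hcM1 : cM1 ≤ cM) (hcM1' : 0 ≤ cM1) (hcM : 0 ≤ cM) :
    SA + SB ≤ cn * (s * cM + (1 - s) * cM1) := by
  rcases le_total a (s * cn) with hcase | hcase
  · nlinarith [mul_nonneg (sub_nonneg.2 hcase) (sub_nonneg.2 hcM1)]
  · nlinarith [mul_nonneg (sub_nonneg.2 hcase) hcM1', mul_nonneg (sub_nonneg.2 hNs) hcM]

end Aux

/-- For `q ≥ 2` and a bounded self-map `φ` with `sup_v |φ v| = M`, `C_φ` is bounded on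
`T_p` with `‖C_φ‖^p ≤ c_M`, and `‖C_φ‖^p = c_M` iff `sup_n N_{M,n}/c_n = 1`. -/
theorem bounded_symbol_comp_Tp (q : ℕ) (hq : 2 ≤ q) (T : HomTree q) (p : ℝ) (hp : 1 ≤ p)
    (phi : T.V → T.V) (M : ℕ)
    (hub : ∀ v, T.level (phi v) ≤ M) (hsup : ∃ v, T.level (phi v) = M) :
    T.BoundedCompTp p phi ∧
    T.opNormTp p phi ^ p ≤ (treeC q M : ℝ) ∧
    (T.opNormTp p phi ^ p = (treeC q M : ℝ) ↔
      (⨆ n : ℕ, (T.Nmax phi M n : ℝ) / (treeC q n : ℝ)) = 1) := by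
  have hq1 : 1 ≤ q := by omega
  have hp0 : 0 < p := by linarith
  have hcM : (0:ℝ) < (treeC q M : ℝ) := treeC_cast_pos hq1 M
  set C : ℝ := (treeC q M : ℝ) ^ (1/p) with hC
  have hC0 : 0 < C := Real.rpow_pos_of_pos hcM _
  have hbounded : T.BoundedCompTp p phi := by
    constructor
    · intro f hf
      exact ⟨C * T.normTp p f, by rintro x ⟨n, rfl⟩; exact T.Mp_comp_le hq1 hp0 hub hf n⟩
    · exact ⟨C, fun f hf => ciSup_le fun n => T.Mp_comp_le hq1 hp0 hub hf n⟩
  set Sset := {x : ℝ | ∃ f : T.V → ℂ, T.memTp p f ∧ T.normTp p f = 1 ∧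
      x = T.normTp p (f ∘ phi)} with hSset
  have hopdef : T.opNormTp p phi = sSup Sset := rfl
  have hMpone : ∀ g : T.V → ℂ, (∀ v, g v = 1) → ∀ n, T.Mp p n g = 1 := by
    intro g hg n
    have h : ∀ v ∈ T.levelFinset n, ‖g v‖ ^ p = 1 := by
      intro v _; rw [hg v, norm_one, Real.one_rpow]
    rw [HomTree.Mp, Finset.sum_congr rfl h, Finset.sum_const, T.card_levelFinset,
      nsmul_eq_mul, mul_one, one_div_mul_cancel (treeC_cast_pos hq1 n).ne',
      Real.one_rpow]
  have hone : (1:ℝ) ∈ Sset := by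
    have h1 : ∀ n, T.Mp p n (fun _ => (1:ℂ)) = 1 := hMpone _ (fun _ => rfl)
    have h2 : ∀ n, T.Mp p n ((fun _ => (1:ℂ)) ∘ phi) = 1 := hMpone _ (fun _ => rfl)
    refine ⟨fun _ => 1, ⟨1, ?_⟩, ?_, ?_⟩
    · rintro x ⟨n, rfl⟩; exact (h1 n).le
    · show (⨆ n, T.Mp p n (fun _ => (1:ℂ))) = 1
      simp only [h1]; exact ciSup_const
    · show (1:ℝ) = ⨆ n, T.Mp p n ((fun _ => (1:ℂ)) ∘ phi)
      simp only [h2]; exact ciSup_const.symm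
  have hbdd : ∀ x ∈ Sset, x ≤ C := by
    rintro x ⟨f, hf, hnf, rfl⟩
    have h := ciSup_le fun n => T.Mp_comp_le hq1 hp0 hub hf n
    rw [hnf, mul_one] at h
    exact h
  have hSbdd : BddAbove Sset := ⟨C, fun x hx => hbdd x hx⟩
  have hople : T.opNormTp p phi ≤ C := by
    rw [hopdef]; exact csSup_le ⟨1, hone⟩ hbdd
  have hop1 : (1:ℝ) ≤ T.opNormTp p phi := by
    rw [hopdef]; exact le_csSup hSbdd hone
  have hop0 : (0:ℝ) ≤ T.opNormTp p phi := by linarith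
  have hupper : T.opNormTp p phi ^ p ≤ (treeC q M : ℝ) := by
    calc T.opNormTp p phi ^ p ≤ C ^ p := Real.rpow_le_rpow hop0 hople hp0.le
      _ = (treeC q M : ℝ) := by rw [hC, one_div, Real.rpow_inv_rpow hcM.le hp0.ne']
  set s := ⨆ n : ℕ, (T.Nmax phi M n : ℝ) / (treeC q n : ℝ) with hs
  have hterm_nonneg : ∀ n, 0 ≤ (T.Nmax phi M n : ℝ) / (treeC q n : ℝ) := fun n => by positivity
  have hterm_le : ∀ n, (T.Nmax phi M n : ℝ) / (treeC q n : ℝ) ≤ 1 := by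
    intro n
    rw [div_le_one (treeC_cast_pos hq1 n)]
    have h : T.Nmax phi M n ≤ treeC q n := by
      rw [← T.card_levelFinset n]
      exact Finset.sup_le fun w _ => Finset.card_filter_le _ _
    exact_mod_cast h
  have hsbdd : BddAbove (Set.range fun n => (T.Nmax phi M n : ℝ) / (treeC q n : ℝ)) :=
    ⟨1, by rintro x ⟨n, rfl⟩; exact hterm_le n⟩
  have hs_le_one : s ≤ 1 := ciSup_le hterm_le
  have hs0 : 0 ≤ s := (hterm_nonneg 0).trans (by rw [hs]; exact le_ciSup hsbdd 0)
  have hM0 : M = 0 → s = 1 := by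
    intro hM
    subst hM
    have hroot : ∀ v, phi v = T.root := fun v =>
      (T.level_eq_zero_iff _).1 (Nat.le_zero.1 (hub v))
    have hL0 : T.levelFinset 0 = {T.root} := by
      apply Finset.eq_singleton_iff_unique_mem.2
      exact ⟨T.mem_levelFinset.2 ((T.level_eq_zero_iff _).2 rfl),
        fun x hx => (T.level_eq_zero_iff _).1 (T.mem_levelFinset.1 hx)⟩
    have hterm : ∀ n, (T.Nmax phi 0 n : ℝ) / (treeC q n : ℝ) = 1 := by
      intro n
      have h1 : T.Nmax phi 0 n = treeC q n := by
        rw [HomTree.Nmax, hL0, Finset.sup_singleton, HomTree.Nphi,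
          Finset.filter_true_of_mem (fun v _ => hroot v), T.card_levelFinset]
      rw [h1, div_self (treeC_cast_pos hq1 n).ne']
    rw [hs]
    simp only [hterm]
    exact ciSup_const
  have hmpr : s = 1 → T.opNormTp p phi ^ p = (treeC q M : ℝ) := by
    intro hs1
    refine le_antisymm hupper (le_of_forall_pos_le_add ?_)
    intro δ hδ
    set ε := min (δ / (treeC q M : ℝ)) (1/2) with hε
    have hε0 : 0 < ε := lt_min (by positivity) (by norm_num)
    have hε1 : ε < 1 := lt_of_le_of_lt (min_le_right _ _) (by norm_num)
    have hlt : (1 - ε : ℝ) < s := by rw [hs1]; linarith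
    rw [hs] at hlt
    obtain ⟨n, hn⟩ := exists_lt_of_lt_ciSup hlt
    have hLM : (T.levelFinset M).Nonempty := Finset.card_pos.1
      (by rw [T.card_levelFinset]; exact treeC_pos hq1 M)
    obtain ⟨w, hwmem, hweq0⟩ :=
      Finset.exists_mem_eq_sup (T.levelFinset M) hLM (fun w => T.Nphi phi n w)
    have hweq : T.Nmax phi M n = T.Nphi phi n w := hweq0
    have hlw : T.level w = M := T.mem_levelFinset.1 hwmem
    set f : T.V → ℂ := fun u => if u = w then (((treeC q M : ℝ) ^ (1/p) : ℝ) : ℂ) else 0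
      with hfdef
    have habs : ∀ u, ‖f u‖ ^ p = if u = w then (treeC q M : ℝ) else 0 := by
      intro u
      by_cases hu : u = w
      · simp only [hfdef, if_pos hu]
        rw [Complex.norm_real, Real.norm_eq_abs, abs_of_nonneg (Real.rpow_nonneg hcM.le _), one_div,
          Real.rpow_inv_rpow hcM.le hp0.ne']
      · simp only [hfdef, if_neg hu, norm_zero, Real.zero_rpow hp0.ne']
    have hsum : ∀ m, ∑ v ∈ T.levelFinset m, ‖f v‖ ^ p =
        if T.level w = m then (treeC q M : ℝ) else 0 := by
      intro m
      rw [Finset.sum_congr rfl (fun v _ => habs v),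
        Finset.sum_ite_eq' (T.levelFinset m) w (fun _ => (treeC q M : ℝ))]
      simp [HomTree.mem_levelFinset]
    have hMpf : ∀ m, T.Mp p m f = if m = M then 1 else 0 := by
      intro m
      rw [HomTree.Mp, hsum m, hlw]
      rcases eq_or_ne m M with hm | hm
      · subst hm
        simp only [eq_self_iff_true, if_true]
        rw [one_div_mul_cancel (treeC_cast_pos hq1 m).ne', Real.one_rpow]
      · rw [if_neg (Ne.symm hm), if_neg hm, mul_zero,
          Real.zero_rpow (one_div_ne_zero hp0.ne')]
    have hfmem : T.memTp p f := by
      refine ⟨1, ?_⟩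
      rintro x ⟨m, rfl⟩
      show T.Mp p m f ≤ 1
      rw [hMpf m]; split <;> norm_num
    have hnf : T.normTp p f = 1 := by
      refine le_antisymm (ciSup_le fun m => by rw [hMpf m]; split <;> norm_num) ?_
      have h := le_ciSup hfmem M
      rwa [hMpf M, if_pos rfl] at h
    have hcompsum : ∀ m, ∑ v ∈ T.levelFinset m, ‖(f ∘ phi) v‖ ^ p =
        (T.Nphi phi m w : ℝ) * (treeC q M : ℝ) := by
      intro m
      simp only [Function.comp_apply]
      rw [Finset.sum_congr rfl (fun v _ => habs (phi v)), Finset.sum_ite,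
        Finset.sum_const, Finset.sum_const_zero, add_zero, nsmul_eq_mul, HomTree.Nphi]
    have hcm : ∀ m, T.Mp p m (f ∘ phi) ≤ C := by
      intro m
      rw [HomTree.Mp, hcompsum m, hC]
      refine Real.rpow_le_rpow (by positivity) ?_ (by positivity)
      have hN : (T.Nphi phi m w : ℝ) ≤ (treeC q m : ℝ) := by
        exact_mod_cast (Finset.card_filter_le _ _).trans_eq (T.card_levelFinset m)
      calc (1/(treeC q m:ℝ)) * ((T.Nphi phi m w : ℝ) * (treeC q M:ℝ))
          ≤ (1/(treeC q m:ℝ)) * ((treeC q m:ℝ) * (treeC q M:ℝ)) := by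
            exact mul_le_mul_of_nonneg_left
              (mul_le_mul_of_nonneg_right hN hcM.le) (by positivity)
        _ = (treeC q M:ℝ) := by
            rw [one_div, inv_mul_eq_div, mul_div_cancel_left₀ _ (treeC_cast_pos hq1 m).ne']
    have hcompmem : T.memTp p (f ∘ phi) := ⟨C, by rintro x ⟨m, rfl⟩; exact hcm m⟩
    have hNn : ((1 - ε) * (treeC q n : ℝ)) ≤ (T.Nphi phi n w : ℝ) := by
      have h := (lt_div_iff₀ (treeC_cast_pos hq1 n)).1 hn
      rw [hweq] at h
      exact h.le
    have hε1' : (0:ℝ) ≤ 1 - ε := by linarith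
    have hlow : ((1-ε) * (treeC q M : ℝ)) ^ (1/p) ≤ T.Mp p n (f ∘ phi) := by
      rw [HomTree.Mp, hcompsum n]
      refine Real.rpow_le_rpow (by positivity) ?_ (by positivity)
      rw [one_div, le_inv_mul_iff₀ (treeC_cast_pos hq1 n)]
      nlinarith [mul_nonneg (sub_nonneg.2 hNn) hcM.le]
    have hx : T.normTp p (f ∘ phi) ∈ Sset := ⟨f, hfmem, hnf, rfl⟩
    have hop_ge : ((1-ε) * (treeC q M:ℝ)) ^ (1/p) ≤ T.opNormTp p phi := by
      rw [hopdef]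
      exact le_trans (hlow.trans (le_ciSup hcompmem n)) (le_csSup hSbdd hx)
    have hεM : (0:ℝ) ≤ (1-ε) * (treeC q M:ℝ) := mul_nonneg hε1' hcM.le
    have hfin : (1-ε) * (treeC q M:ℝ) ≤ T.opNormTp p phi ^ p := by
      have h := Real.rpow_le_rpow (Real.rpow_nonneg hεM _) hop_ge hp0.le
      rwa [one_div, Real.rpow_inv_rpow hεM hp0.ne'] at h
    have hεδ : ε * (treeC q M:ℝ) ≤ δ := by
      have h : ε ≤ δ / (treeC q M:ℝ) := min_le_left _ _
      rwa [le_div_iff₀ hcM] at h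
    linarith
  have hmp : T.opNormTp p phi ^ p = (treeC q M : ℝ) → s = 1 := by
    intro heq
    by_contra hne
    have hslt : s < 1 := lt_of_le_of_ne hs_le_one hne
    rcases Nat.eq_zero_or_pos M with hM | hM
    · exact absurd (hM0 hM) (ne_of_lt hslt)
    have hcM1 : (treeC q (M-1) : ℝ) < (treeC q M : ℝ) := by
      exact_mod_cast treeC_lt hq hM
    have hcM1' : (0:ℝ) < (treeC q (M-1) : ℝ) := treeC_cast_pos hq1 (M-1)
    set K := s * (treeC q M : ℝ) + (1 - s) * (treeC q (M-1) : ℝ) with hK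
    have hK0 : 0 ≤ K := by nlinarith
    have hKlt : K < (treeC q M : ℝ) := by nlinarith
    have hkey : ∀ x ∈ Sset, x ≤ K ^ (1/p) := by
      rintro x ⟨f, hf, hnf, rfl⟩
      refine ciSup_le fun n => ?_
      have hpt : ∀ (w' : T.V) (m : ℕ), T.level w' ≤ m →
          ‖f w'‖ ^ p ≤ (treeC q m : ℝ) := by
        intro w' m hw'
        have h := T.abs_rpow_le' hq1 hp0 hf hw'
        rwa [hnf, Real.one_rpow, mul_one] at h
      set A := (T.levelFinset n).filter (fun v => T.level (phi v) = M) with hA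
      set B := (T.levelFinset n).filter (fun v => ¬ T.level (phi v) = M) with hB
      have hsplit : ∑ v ∈ T.levelFinset n, ‖f (phi v)‖ ^ p =
          (∑ v ∈ A, ‖f (phi v)‖ ^ p) +
          (∑ v ∈ B, ‖f (phi v)‖ ^ p) :=
        (Finset.sum_filter_add_sum_filter_not (T.levelFinset n) _ _).symm
      have hA1 : ∑ v ∈ A, ‖f (phi v)‖ ^ p ≤ (A.card : ℝ) * (treeC q M : ℝ) := by
        have h := Finset.sum_le_card_nsmul A (fun v => ‖f (phi v)‖ ^ p)
          ((treeC q M : ℝ)) (fun v _ => hpt (phi v) M (hub v))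
        simpa [nsmul_eq_mul] using h
      have hB1 : ∑ v ∈ B, ‖f (phi v)‖ ^ p ≤
          (B.card : ℝ) * (treeC q (M-1) : ℝ) := by
        have h := Finset.sum_le_card_nsmul B (fun v => ‖f (phi v)‖ ^ p)
          ((treeC q (M-1) : ℝ)) (fun v hv => by
            refine hpt (phi v) (M-1) ?_
            have h1 := (Finset.mem_filter.1 hv).2
            have h2 := hub v
            omega)
        simpa [nsmul_eq_mul] using h
      have hmaps : ∀ v ∈ A, phi v ∈ T.levelFinset M := fun v hv =>
        T.mem_levelFinset.2 (Finset.mem_filter.1 hv).2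
      have hfib : ∑ v ∈ A, ‖f (phi v)‖ ^ p =
          ∑ w' ∈ T.levelFinset M, ∑ v ∈ A.filter (fun v => phi v = w'),
            ‖f (phi v)‖ ^ p :=
        (Finset.sum_fiberwise_of_maps_to hmaps _).symm
      have hinner : ∀ w' ∈ T.levelFinset M,
          ∑ v ∈ A.filter (fun v => phi v = w'), ‖f (phi v)‖ ^ p ≤
            (T.Nmax phi M n : ℝ) * ‖f w'‖ ^ p := by
        intro w' hw'
        have h1 : ∑ v ∈ A.filter (fun v => phi v = w'), ‖f (phi v)‖ ^ p
            = ((A.filter (fun v => phi v = w')).card : ℝ) * ‖f w'‖ ^ p := by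
          rw [Finset.sum_congr rfl (fun v hv => by rw [(Finset.mem_filter.1 hv).2]),
            Finset.sum_const, nsmul_eq_mul]
        rw [h1]
        refine mul_le_mul_of_nonneg_right ?_ (Real.rpow_nonneg (norm_nonneg _) _)
        have h2 : (A.filter (fun v => phi v = w')).card ≤ T.Nphi phi n w' :=
          Finset.card_le_card (Finset.filter_subset_filter _ (Finset.filter_subset _ _))
        have h3 : T.Nphi phi n w' ≤ T.Nmax phi M n := Finset.le_sup hw'
        exact_mod_cast h2.trans h3
      have hfsum : ∑ w' ∈ T.levelFinset M, ‖f w'‖ ^ p ≤ (treeC q M : ℝ) := by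
        rw [T.sum_eq_treeC_mul hq1 hp0]
        have h1 : T.Mp p M f ^ p ≤ 1 := by
          have h2 : T.Mp p M f ≤ 1 := by
            have h3 := T.Mp_le_normTp hf M
            rwa [hnf] at h3
          exact Real.rpow_le_one (T.Mp_nonneg hp0 f M) h2 hp0.le
        nlinarith
      have hA2 : ∑ v ∈ A, ‖f (phi v)‖ ^ p ≤
          (T.Nmax phi M n : ℝ) * (treeC q M : ℝ) := by
        rw [hfib]
        calc ∑ w' ∈ T.levelFinset M, ∑ v ∈ A.filter (fun v => phi v = w'),
              ‖f (phi v)‖ ^ p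
            ≤ ∑ w' ∈ T.levelFinset M, (T.Nmax phi M n : ℝ) * ‖f w'‖ ^ p :=
              Finset.sum_le_sum hinner
          _ = (T.Nmax phi M n : ℝ) * ∑ w' ∈ T.levelFinset M, ‖f w'‖ ^ p :=
              (Finset.mul_sum _ _ _).symm
          _ ≤ (T.Nmax phi M n : ℝ) * (treeC q M : ℝ) :=
              mul_le_mul_of_nonneg_left hfsum (Nat.cast_nonneg _)
      have hNs : (T.Nmax phi M n : ℝ) ≤ s * (treeC q n : ℝ) := by
        have h := le_ciSup hsbdd n
        rw [← hs] at h
        rw [div_le_iff₀ (treeC_cast_pos hq1 n)] at h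
        exact h
      have hcard : (A.card : ℝ) + (B.card : ℝ) = (treeC q n : ℝ) := by
        have h := Finset.card_filter_add_card_filter_not
          (s := T.levelFinset n) (p := fun v => T.level (phi v) = M)
        rw [T.card_levelFinset] at h
        exact_mod_cast h
      have htot : ∑ v ∈ T.levelFinset n, ‖f (phi v)‖ ^ p ≤
          (treeC q n : ℝ) * K := by
        rw [hsplit, hK]
        exact arith_aux hA1 hA2 hB1 hNs hcard hcM1.le hcM1'.le hcM.le
      have hbase : (1/(treeC q n:ℝ)) *
          (∑ v ∈ T.levelFinset n, ‖(f ∘ phi) v‖ ^ p) ≤ K := by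
        simp only [Function.comp_apply]
        rw [one_div, inv_mul_le_iff₀ (treeC_cast_pos hq1 n)]
        exact htot
      rw [HomTree.Mp]
      refine Real.rpow_le_rpow ?_ hbase (by positivity)
      have h := T.sum_nonneg' hp0 (f ∘ phi) n
      positivity
    have hle : T.opNormTp p phi ^ p ≤ K := by
      have h1 : T.opNormTp p phi ≤ K ^ (1/p) := by
        rw [hopdef]; exact csSup_le ⟨1, hone⟩ hkey
      have h := Real.rpow_le_rpow hop0 h1 hp0.le
      rwa [one_div, Real.rpow_inv_rpow hK0 hp0.ne'] at h
    rw [heq] at hle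
    linarith
  exact ⟨hbounded, hupper, hmp, hmpr⟩
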